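/- Let g : ℝ → ℝ be continuous with compact support contained in [a, b], and let φ₀ : ℝ → ℝ solve φ₀'' = 0 (i.e. φ₀ is affine). Define recursively φ_{n}(t) = −∫_ℝ g(s) φ_{n−1}(s) Θ(t − s) ds with Θ(x) = x·θ(x). Then for every compact K ⊂ ℝ the series Σ_{n≥0} φ_n converges uniformly on K, and the sum φ = Σ_{n≥0} φ_n is a C² function solving φ''(t) + g(t) φ(t) = 0 for all t, with φ(t) = φ₀(t) for all t ≤ a. -/

import Mathlib

open MeasureTheory Filter

open intervalIntegral Topology

lemma ifker (x : ℝ) : (if 0 ≤ x then x else 0) = max x 0 := by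
  rcases le_or_gt 0 x with h | h
  · rw [if_pos h, max_eq_left h]
  · rw [if_neg (not_le.mpr h), max_eq_right h.le]

lemma ftc_cont {f : ℝ → ℝ} (hf : Continuous f) (a t : ℝ) :
    HasDerivAt (fun u => ∫ s in a..u, f s) (f t) t :=
  integral_hasDerivAt_right (hf.intervalIntegrable _ _)
    (hf.stronglyMeasurableAtFilter _ _) hf.continuousAt

lemma rep {f : ℝ → ℝ} (hf : Continuous f) {a : ℝ} (h0 : ∀ s, s < a → f s = 0) (t : ℝ) :
    ∫ s : ℝ, f s * max (t - s) 0 = ∫ s in a..t, f s * (t - s) := by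
  rcases le_or_gt a t with h | h
  · have hz : ∀ x, x ∉ Set.Icc a t → f x * max (t - x) 0 = 0 := by
      intro x hx
      rcases lt_or_ge x a with h1 | h1
      · rw [h0 x h1, zero_mul]
      · have : t < x := by
          by_contra hc
          exact hx ⟨h1, not_lt.mp hc⟩
        rw [max_eq_right (by linarith), mul_zero]
    rw [← setIntegral_eq_integral_of_forall_compl_eq_zero hz,
      integral_Icc_eq_integral_Ioc, ← intervalIntegral.integral_of_le h]
    apply intervalIntegral.integral_congr
    intro s hs
    rw [Set.uIcc_of_le h] at hs
    simp only
    rw [max_eq_left (by linarith [hs.2])]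
  · have hz : ∀ s : ℝ, f s * max (t - s) 0 = 0 := by
      intro s
      rcases lt_or_ge s a with h1 | h1
      · rw [h0 s h1, zero_mul]
      · rw [max_eq_right (by linarith), mul_zero]
    simp only [hz, MeasureTheory.integral_zero]
    rw [intervalIntegral.integral_of_ge h.le]
    rw [MeasureTheory.integral_Ioc_eq_integral_Ioo]
    rw [MeasureTheory.setIntegral_congr_fun measurableSet_Ioo
      (g := fun _ => (0:ℝ)) (fun s hs => by rw [h0 s hs.2, zero_mul])]
    simp

lemma psi_deriv {f : ℝ → ℝ} (hf : Continuous f) {a : ℝ} (h0 : ∀ s, s < a → f s = 0) (t : ℝ) :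
    HasDerivAt (fun u => ∫ s : ℝ, f s * max (u - s) 0) (∫ s in a..t, f s) t := by
  have heq : (fun u => ∫ s : ℝ, f s * max (u - s) 0)
      = fun u => (∫ s in a..u, f s) * u - ∫ s in a..u, f s * s := by
    funext u
    rw [rep hf h0 u]
    have h1 : IntervalIntegrable (fun s => f s * u) volume a u :=
      (hf.mul continuous_const).intervalIntegrable _ _
    have h2 : IntervalIntegrable (fun s => f s * s) volume a u :=
      (hf.mul continuous_id).intervalIntegrable _ _
    rw [show (fun s => f s * (u - s)) = fun s => f s * u - f s * s by funext s; ring,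
      intervalIntegral.integral_sub h1 h2, intervalIntegral.integral_mul_const]
  rw [heq]
  have hH := ftc_cont hf a t
  have hG := ftc_cont (hf.mul continuous_id) a t
  have := (hH.mul (hasDerivAt_id t)).sub hG
  exact this.congr_deriv (by simp)

/-- Convergence of the Volterra/Yang–Feldman iteration for the retarded equation
`φ = φ₀ − R(g·φ)`: the series Σ φₙ converges uniformly on compacts, and its sum is a C²
solution of `φ'' + gφ = 0` agreeing with the affine free solution `φ₀` for `t ≤ a`. -/
theorem stmt_6 (g : ℝ → ℝ) (hg : Continuous g) (a b : ℝ)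
    (hsupp : tsupport g ⊆ Set.Icc a b)
    (c d : ℝ) (φ₀ : ℝ → ℝ) (hφ₀ : ∀ t, φ₀ t = c + d * t)
    (φ : ℕ → ℝ → ℝ) (h0 : φ 0 = φ₀)
    (hrec : ∀ n t, φ (n + 1) t =
      -∫ s : ℝ, g s * φ n s * (if 0 ≤ t - s then t - s else 0)) :
    (∀ K : Set ℝ, IsCompact K →
      TendstoUniformlyOn (fun N t => ∑ n ∈ Finset.range N, φ n t)
        (fun t => ∑' n, φ n t) atTop K) ∧
    ContDiff ℝ 2 (fun t => ∑' n, φ n t) ∧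
    (∀ t, deriv (deriv fun t' => ∑' n, φ n t') t + g t * ∑' n, φ n t = 0) ∧
    (∀ t, t ≤ a → (∑' n, φ n t) = φ₀ t) := by
  have hrec' : ∀ n t, φ (n + 1) t = -∫ s : ℝ, g s * φ n s * max (t - s) 0 := by
    intro n t; simp only [hrec, ifker]
  have hgz : ∀ s, s ∉ Set.Icc a b → g s = 0 := by
    intro s hs
    by_contra h
    exact hs (hsupp (subset_tsupport g (by simpa [Function.mem_support] using h)))
  have hgza : ∀ s, s < a → g s = 0 := fun s hs =>
    hgz s (fun hm => absurd hm.1 (not_le.mpr hs))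
  have hgc : HasCompactSupport g :=
    IsCompact.of_isClosed_subset isCompact_Icc (isClosed_tsupport g) hsupp
  obtain ⟨M, hM0, hMg⟩ : ∃ M, 0 ≤ M ∧ ∀ s, |g s| ≤ M := by
    obtain ⟨M, hM⟩ := (isCompact_Icc.image hg.abs).bddAbove
    refine ⟨max M 0, le_max_right _ _, fun s => ?_⟩
    rcases em (s ∈ Set.Icc a b) with h | h
    · exact le_trans (hM (Set.mem_image_of_mem _ h)) (le_max_left _ _)
    · rw [hgz s h]; simp
  set L := max (b - a) 0 with hL
  have hL0 : 0 ≤ L := le_max_right _ _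
  have hbaL : b - a ≤ L := le_max_left _ _
  set C0 := |c| + |d| * max |a| |b| with hC0def
  have hC00 : 0 ≤ C0 := by positivity
  have hC0 : ∀ t ∈ Set.Icc a b, |φ₀ t| ≤ C0 := by
    intro t ht
    rw [hφ₀]
    have ht' : |t| ≤ max |a| |b| := abs_le_max_abs_abs ht.1 ht.2
    calc |c + d * t| ≤ |c| + |d * t| := abs_add_le _ _
      _ = |c| + |d| * |t| := by rw [abs_mul]
      _ ≤ C0 := add_le_add_right (mul_le_mul_of_nonneg_left ht' (abs_nonneg d)) _
  have hker_cont : ∀ t : ℝ, Continuous fun s : ℝ => max (t - s) 0 := fun t =>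
    (continuous_const.sub continuous_id).max continuous_const
  have main : ∀ n, Continuous (φ n) ∧ ∀ t ∈ Set.Icc a b,
      |φ n t| ≤ C0 * (M * L) ^ n * (t - a) ^ n / n.factorial := by
    intro n
    induction n with
    | zero =>
      constructor
      · rw [h0, funext hφ₀]
        exact continuous_const.add (continuous_const.mul continuous_id)
      · intro t ht
        simpa [h0] using hC0 t ht
    | succ n ih =>
      obtain ⟨ihc, ihb⟩ := ih
      have hfc : Continuous fun s => g s * φ n s := hg.mul ihc
      have hfz : ∀ s, s < a → g s * φ n s = 0 := fun s hs => by rw [hgza s hs, zero_mul]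
      constructor
      · rw [show φ (n + 1) = fun t => -∫ s : ℝ, g s * φ n s * max (t - s) 0 from
          funext fun t => hrec' n t]
        exact continuous_iff_continuousAt.mpr fun t => ((psi_deriv hfc hfz t).neg).continuousAt
      · intro t ht
        obtain ⟨hat, htb⟩ := ht
        have hrepn : φ (n + 1) t = -∫ s in a..t, (g s * φ n s) * (t - s) := by
          rw [hrec' n t, ← rep hfc hfz t]
        rw [hrepn, abs_neg]
        set D := M * L * (C0 * (M * L) ^ n / n.factorial) with hD
        have hD0 : 0 ≤ C0 * (M * L) ^ n / n.factorial :=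
          div_nonneg (mul_nonneg hC00 (pow_nonneg (mul_nonneg hM0 hL0) _)) (Nat.cast_nonneg _)
        have hb : ∀ᵐ s ∂(volume.restrict (Set.uIoc a t)),
            ‖(g s * φ n s) * (t - s)‖ ≤ D * (s - a) ^ n := by
          refine (ae_restrict_mem measurableSet_uIoc).mono fun s hs => ?_
          rw [Set.uIoc_of_le hat] at hs
          obtain ⟨has, hst⟩ := hs
          have hsab : s ∈ Set.Icc a b := ⟨has.le, hst.trans htb⟩
          have h1 : |g s| ≤ M := hMg s
          have h2 : |φ n s| ≤ C0 * (M * L) ^ n * (s - a) ^ n / n.factorial := ihb s hsab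
          have h2' : 0 ≤ C0 * (M * L) ^ n * (s - a) ^ n / n.factorial :=
            (abs_nonneg _).trans h2
          have h3 : |t - s| ≤ L := by
            rw [abs_of_nonneg (by linarith)]
            have : t - s ≤ b - a := by linarith
            linarith
          calc ‖(g s * φ n s) * (t - s)‖ = |g s| * |φ n s| * |t - s| := by
                rw [Real.norm_eq_abs, abs_mul, abs_mul]
            _ ≤ M * (C0 * (M * L) ^ n * (s - a) ^ n / n.factorial) * L := by
                apply mul_le_mul _ h3 (abs_nonneg _) (mul_nonneg hM0 h2')
                exact mul_le_mul h1 h2 (abs_nonneg _) hM0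
            _ = D * (s - a) ^ n := by rw [hD]; ring
        have hDint : IntervalIntegrable (fun s => D * (s - a) ^ n) volume a t :=
          (continuous_const.mul ((continuous_id.sub continuous_const).pow n)).intervalIntegrable _ _
        have hle := intervalIntegral.norm_integral_le_abs_of_norm_le hb hDint
        have hval : ∫ s in a..t, D * (s - a) ^ n = D * ((t - a) ^ (n + 1) / (n + 1)) := by
          rw [intervalIntegral.integral_const_mul]
          congr 1
          rw [intervalIntegral.integral_comp_sub_right (fun x => x ^ n) a, sub_self,
            integral_pow]
          rw [zero_pow (Nat.succ_ne_zero n)]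
          ring
        have hD0' : 0 ≤ D := mul_nonneg (mul_nonneg hM0 hL0) hD0
        have hta : 0 ≤ t - a := by linarith
        have hvalnn : 0 ≤ D * ((t - a) ^ (n + 1) / (n + 1)) := by positivity
        rw [Real.norm_eq_abs] at hle
        rw [hval, abs_of_nonneg hvalnn] at hle
        refine hle.trans (le_of_eq ?_)
        rw [hD, Nat.factorial_succ]
        have hfne : (n.factorial : ℝ) ≠ 0 := by positivity
        have hne : ((n : ℝ) + 1) ≠ 0 := by positivity
        push_cast
        field_simp
        ring
  set A : ℕ → ℝ := fun n => C0 * ((M * L) * L) ^ n / n.factorial with hA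
  have hA0 : ∀ n, 0 ≤ A n := fun n =>
    div_nonneg (mul_nonneg hC00 (pow_nonneg (mul_nonneg (mul_nonneg hM0 hL0) hL0) _))
      (Nat.cast_nonneg _)
  have hAsum : Summable A := by
    have := (Real.summable_pow_div_factorial ((M * L) * L)).mul_left C0
    simpa [hA, mul_div_assoc] using this
  have hAb : ∀ n, ∀ t ∈ Set.Icc a b, |φ n t| ≤ A n := by
    intro n t ht
    refine ((main n).2 t ht).trans ?_
    have h1 : 0 ≤ t - a := by linarith [ht.1]
    have h2 : t - a ≤ L := by
      have : t - a ≤ b - a := by linarith [ht.2]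
      linarith
    rw [hA]
    calc C0 * (M * L) ^ n * (t - a) ^ n / n.factorial
        = C0 * ((M * L) * (t - a)) ^ n / n.factorial := by rw [mul_pow, mul_pow]; ring
      _ ≤ C0 * ((M * L) * L) ^ n / n.factorial := by
          have hfac : (0:ℝ) < n.factorial := by positivity
          rw [div_le_div_iff₀ hfac hfac]
          have hb0 : 0 ≤ (M * L) * (t - a) := mul_nonneg (mul_nonneg hM0 hL0) h1
          have hbb : (M * L) * (t - a) ≤ (M * L) * L :=
            mul_le_mul_of_nonneg_left h2 (mul_nonneg hM0 hL0)
          have h5 := pow_le_pow_left₀ hb0 hbb n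
          exact mul_le_mul_of_nonneg_right (mul_le_mul_of_nonneg_left h5 hC00) hfac.le
  have hGlob : ∀ n t, |φ (n + 1) t| ≤ M * A n * L * max (t - a) 0 := by
    intro n t
    rw [hrec' n t, abs_neg]
    have hFz : ∀ x, x ∉ Set.Icc a b → g x * φ n x * max (t - x) 0 = 0 := fun x hx => by
      rw [hgz x hx, zero_mul, zero_mul]
    rw [← setIntegral_eq_integral_of_forall_compl_eq_zero hFz]
    have hmes : volume (Set.Icc a b) < ⊤ := by
      rw [Real.volume_Icc]; exact ENNReal.ofReal_lt_top
    have hCle : ∀ x ∈ Set.Icc a b,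
        ‖g x * φ n x * max (t - x) 0‖ ≤ M * A n * max (t - a) 0 := by
      intro x hx
      have h1 : |g x| ≤ M := hMg x
      have h2 : |φ n x| ≤ A n := hAb n x hx
      have h3 : max (t - x) 0 ≤ max (t - a) 0 :=
        max_le_max (by linarith [hx.1]) le_rfl
      calc ‖g x * φ n x * max (t - x) 0‖ = |g x| * |φ n x| * max (t - x) 0 := by
            rw [Real.norm_eq_abs, abs_mul, abs_mul, abs_of_nonneg (le_max_right (t - x) 0)]
        _ ≤ M * A n * max (t - a) 0 := by
            apply mul_le_mul _ h3 (le_max_right _ _) (mul_nonneg hM0 (hA0 n))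
            exact mul_le_mul h1 h2 (abs_nonneg _) hM0
    have hmeas : AEStronglyMeasurable (fun x => g x * φ n x * max (t - x) 0)
        (volume.restrict (Set.Icc a b)) :=
      ((hg.mul (main n).1).mul (hker_cont t)).aestronglyMeasurable.restrict
    have := norm_setIntegral_le_of_norm_le_const hmes hCle
    rw [Real.norm_eq_abs, Real.volume_real_Icc] at this
    calc |∫ x in Set.Icc a b, g x * φ n x * max (t - x) 0| ≤
        M * A n * max (t - a) 0 * max (b - a) 0 := this
      _ = M * A n * L * max (t - a) 0 := by rw [hL]; ring
  have hsum : ∀ t, Summable fun n => φ n t := by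
    intro t
    rw [← summable_nat_add_iff 1]
    apply Summable.of_norm_bounded (((hAsum.mul_left M).mul_right L).mul_right (max (t - a) 0))
    intro n
    rw [Real.norm_eq_abs]
    exact hGlob n t
  have part1 : ∀ K : Set ℝ, IsCompact K →
      TendstoUniformlyOn (fun N t => ∑ n ∈ Finset.range N, φ n t)
        (fun t => ∑' n, φ n t) atTop K := by
    intro K hK
    obtain ⟨r0, hr0⟩ := hK.isBounded.subset_closedBall 0
    set r := max r0 0 with hr
    have hr1 : 0 ≤ r := le_max_right _ _
    have hrK : ∀ t ∈ K, |t| ≤ r := by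
      intro t ht
      have := hr0 ht
      rw [Metric.mem_closedBall, Real.dist_eq, sub_zero] at this
      exact this.trans (le_max_left _ _)
    set u : ℕ → ℝ := fun n =>
      Nat.rec (|c| + |d| * r) (fun m _ => M * A m * L * (r + |a|)) n with hu
    have hus : ∀ n, u (n + 1) = M * A n * L * (r + |a|) := fun n => rfl
    have husum : Summable u := by
      rw [← summable_nat_add_iff 1]
      simpa [hus] using ((hAsum.mul_left M).mul_right L).mul_right (r + |a|)
    apply tendstoUniformlyOn_tsum_nat husum
    intro n t ht
    rw [Real.norm_eq_abs]
    cases n with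
    | zero =>
      rw [h0, hφ₀]
      show |c + d * t| ≤ |c| + |d| * r
      calc |c + d * t| ≤ |c| + |d * t| := abs_add_le _ _
        _ = |c| + |d| * |t| := by rw [abs_mul]
        _ ≤ |c| + |d| * r :=
            add_le_add_right (mul_le_mul_of_nonneg_left (hrK t ht) (abs_nonneg d)) _
    | succ n =>
      rw [hus]
      refine (hGlob n t).trans ?_
      have hmx : max (t - a) 0 ≤ r + |a| := by
        apply max_le
        · have h1 : t ≤ |t| := le_abs_self t
          have h2 : -a ≤ |a| := neg_le_abs a
          have := hrK t ht
          linarith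
        · positivity
      exact mul_le_mul_of_nonneg_left hmx
        (mul_nonneg (mul_nonneg hM0 (hA0 n)) hL0)
  set Φ : ℝ → ℝ := fun t => ∑' n, φ n t with hΦ
  have hΦc : Continuous Φ := by
    rw [continuous_iff_continuousAt]; intro x
    have h1 := part1 (Set.Icc (x - 1) (x + 1)) isCompact_Icc
    have h2 : ContinuousOn Φ (Set.Icc (x - 1) (x + 1)) :=
      h1.continuousOn (Eventually.of_forall fun N =>
        (continuous_finset_sum _ fun n _ => (main n).1).continuousOn).frequently
    exact h2.continuousAt (Icc_mem_nhds (by linarith) (by linarith))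
  set f : ℝ → ℝ := fun s => g s * Φ s with hfdef
  have hfc : Continuous f := hg.mul hΦc
  have hfz : ∀ s, s < a → f s = 0 := fun s hs => by
    simp only [hfdef, hgza s hs, zero_mul]
  have hkey : ∀ t, Φ t = φ₀ t - ∫ s : ℝ, f s * max (t - s) 0 := by
    intro t
    have h1 : Φ t = φ 0 t + ∑' n, φ (n + 1) t := Summable.tsum_eq_zero_add (hsum t)
    have hint : ∀ n, Integrable (fun s => g s * φ n s * max (t - s) 0) := by
      intro n
      apply Continuous.integrable_of_hasCompactSupport
        ((hg.mul (main n).1).mul (hker_cont t))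
      exact HasCompactSupport.intro isCompact_Icc fun x hx => by
        rw [Pi.mul_apply, Pi.mul_apply, hgz x hx, zero_mul, zero_mul]
    have hS : ∀ N : ℕ, ∑ n ∈ Finset.range N, φ (n + 1) t =
        -∫ s : ℝ, g s * (∑ n ∈ Finset.range N, φ n s) * max (t - s) 0 := by
      intro N
      calc ∑ n ∈ Finset.range N, φ (n + 1) t
          = ∑ n ∈ Finset.range N, -∫ s : ℝ, g s * φ n s * max (t - s) 0 :=
            Finset.sum_congr rfl fun n _ => hrec' n t
        _ = -∑ n ∈ Finset.range N, ∫ s : ℝ, g s * φ n s * max (t - s) 0 := by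
            rw [Finset.sum_neg_distrib]
        _ = -∫ s : ℝ, ∑ n ∈ Finset.range N, g s * φ n s * max (t - s) 0 := by
            rw [MeasureTheory.integral_finset_sum _ fun n _ => hint n]
        _ = -∫ s : ℝ, g s * (∑ n ∈ Finset.range N, φ n s) * max (t - s) 0 := by
            congr 1
            apply MeasureTheory.integral_congr_ae
            apply Eventually.of_forall
            intro s
            simp [Finset.mul_sum, Finset.sum_mul]
    have hTend1 : Tendsto (fun N => ∑ n ∈ Finset.range N, φ (n + 1) t) atTop
        (𝓝 (∑' n, φ (n + 1) t)) :=
      ((summable_nat_add_iff 1).mpr (hsum t)).hasSum.tendsto_sum_nat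
    set U := ∑' n, A n with hU
    have hTend2 : Tendsto
        (fun N => ∫ s : ℝ, g s * (∑ n ∈ Finset.range N, φ n s) * max (t - s) 0) atTop
        (𝓝 (∫ s : ℝ, g s * Φ s * max (t - s) 0)) := by
      apply tendsto_integral_of_dominated_convergence
        (bound := fun s => |g s| * (U * (|t| + |a|)))
      · intro N
        exact ((hg.mul (continuous_finset_sum _ fun n _ => (main n).1)).mul
          (hker_cont t)).aestronglyMeasurable
      · exact (hg.abs.integrable_of_hasCompactSupport hgc.abs).mul_const _
      · intro N
        apply Eventually.of_forall
        intro s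
        rcases em (s ∈ Set.Icc a b) with hmem | hmem
        · have hSb : |∑ n ∈ Finset.range N, φ n s| ≤ U := by
            calc |∑ n ∈ Finset.range N, φ n s| ≤ ∑ n ∈ Finset.range N, |φ n s| :=
                  Finset.abs_sum_le_sum_abs _ _
              _ ≤ ∑ n ∈ Finset.range N, A n :=
                  Finset.sum_le_sum fun n _ => hAb n s hmem
              _ ≤ U := Summable.sum_le_tsum _ (fun i _ => hA0 i) hAsum
          have hker : max (t - s) 0 ≤ |t| + |a| := by
            apply max_le
            · have h1 : t ≤ |t| := le_abs_self t
              have h2 : -a ≤ |a| := neg_le_abs a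
              have h3 : a ≤ s := hmem.1
              linarith
            · positivity
          calc ‖g s * (∑ n ∈ Finset.range N, φ n s) * max (t - s) 0‖
              = |g s| * |∑ n ∈ Finset.range N, φ n s| * max (t - s) 0 := by
                rw [Real.norm_eq_abs, abs_mul, abs_mul,
                  abs_of_nonneg (le_max_right (t - s) 0)]
            _ ≤ |g s| * (U * (|t| + |a|)) := by
                rw [← mul_assoc]
                apply mul_le_mul _ hker (le_max_right _ _)
                  (mul_nonneg (abs_nonneg _) ((abs_nonneg _).trans hSb))
                exact mul_le_mul_of_nonneg_left hSb (abs_nonneg _)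
        · rw [hgz s hmem]
          simp
      · apply Eventually.of_forall
        intro s
        exact (((hsum s).hasSum.tendsto_sum_nat).const_mul (g s)).mul_const _
    have heqfun : (fun N => ∑ n ∈ Finset.range N, φ (n + 1) t) =
        fun N => -∫ s : ℝ, g s * (∑ n ∈ Finset.range N, φ n s) * max (t - s) 0 :=
      funext hS
    rw [heqfun] at hTend1
    have h2 : ∑' n, φ (n + 1) t = -∫ s : ℝ, g s * Φ s * max (t - s) 0 :=
      tendsto_nhds_unique hTend1 hTend2.neg
    rw [h1, h2, h0]
    ring_nf
    rfl
  have hΦeq : Φ = fun t => φ₀ t - ∫ s : ℝ, f s * max (t - s) 0 := funext hkey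
  have hH := ftc_cont hfc a
  have hΨd := psi_deriv hfc hfz
  have hΦd : ∀ t, HasDerivAt Φ (d - ∫ s in a..t, f s) t := by
    intro t
    rw [hΦeq]
    have h1 : HasDerivAt (fun u => φ₀ u) d t := by
      have : HasDerivAt (fun u : ℝ => c + d * u) (d * 1) t :=
        ((hasDerivAt_id t).const_mul d).const_add c
      simpa [funext hφ₀] using this
    exact h1.sub (hΨd t)
  have hderiv1 : deriv Φ = fun t => d - ∫ s in a..t, f s := funext fun t => (hΦd t).deriv
  have hd2 : ∀ t, HasDerivAt (deriv Φ) (-(f t)) t := by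
    intro t
    rw [hderiv1]
    exact (hH t).const_sub d
  have hderiv2 : ∀ t, deriv (deriv Φ) t = -(f t) := fun t => (hd2 t).deriv
  refine ⟨part1, ?_, ?_, ?_⟩
  · rw [show (2 : WithTop ℕ∞) = 1 + 1 from rfl, contDiff_succ_iff_deriv]
    refine ⟨fun t => (hΦd t).differentiableAt, by simp, ?_⟩
    rw [contDiff_one_iff_deriv]
    refine ⟨fun t => (hd2 t).differentiableAt, ?_⟩
    rw [show deriv (deriv Φ) = fun t => -(f t) from funext hderiv2]
    exact hfc.neg
  · intro t
    rw [hderiv2 t]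
    show -(g t * Φ t) + g t * Φ t = 0
    ring
  · intro t ht
    have hz : ∀ n, n ≠ 0 → φ n t = 0 := by
      intro n hn
      obtain ⟨m, rfl⟩ := Nat.exists_eq_succ_of_ne_zero hn
      rw [hrec]
      have hzz : ∀ s : ℝ, g s * φ m s * (if 0 ≤ t - s then t - s else 0) = 0 := by
        intro s
        rcases em (s ∈ Set.Icc a b) with hm' | hm'
        · have hts : t - s ≤ 0 := by linarith [hm'.1]
          split_ifs with h
          · rw [le_antisymm hts h, mul_zero]
          · rw [mul_zero]
        · rw [hgz s hm', zero_mul, zero_mul]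
      simp only [hzz, MeasureTheory.integral_zero, neg_zero]
    calc Φ t = φ 0 t := tsum_eq_single 0 fun n hn => hz n hn
      _ = φ₀ t := by rw [h0]
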